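/- Let E be a finite-dimensional real inner product space and let D : E → E be a self-adjoint linear endomorphism. If v ∈ E is such that the set { exp(tD) v : t ∈ ℝ } is bounded in E, then D v = 0. -/

import Mathlib

open RealInnerProductSpace

/-- If `D` is a self-adjoint (symmetric) endomorphism of a finite-dimensional real inner
product space `E` and `v ∈ E` is such that `{ exp(tD) v : t ∈ ℝ }` is bounded, then `D v = 0`. -/
theorem stmt_1 (E : Type*) [NormedAddCommGroup E] [InnerProductSpace ℝ E]
    [FiniteDimensional ℝ E] (D : E →L[ℝ] E)
    (hD : ∀ x y : E, ⟪D x, y⟫ = ⟪x, D y⟫) (v : E)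
    (hbdd : Bornology.IsBounded (Set.range fun t : ℝ => NormedSpace.exp (t • D) v)) :
    D v = 0 := by
  set x : ℝ → E := fun t => NormedSpace.exp (t • D) v with hxdef
  have hx : ∀ t : ℝ, HasDerivAt x (D (x t)) t := by
    intro t
    have h1 : HasDerivAt (fun u : ℝ => NormedSpace.exp (u • D))
        (D * NormedSpace.exp (t • D)) t := hasDerivAt_exp_smul_const' D t
    have h2 := h1.clm_apply (hasDerivAt_const t v)
    simpa using h2
  set g : ℝ → ℝ := fun t => ⟪D (x t), x t⟫ with hgdef
  set f : ℝ → ℝ := fun t => ⟪x t, x t⟫ with hfdef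
  have hDx : ∀ t : ℝ, HasDerivAt (fun t => D (x t)) (D (D (x t))) t := fun t =>
    D.hasFDerivAt.comp_hasDerivAt t (hx t)
  have hg : ∀ t : ℝ, HasDerivAt g (2 * ⟪D (x t), D (x t)⟫) t := by
    intro t
    have := (hDx t).inner ℝ (hx t)
    have e : ⟪D (x t), D (x t)⟫ + ⟪D (D (x t)), x t⟫ = 2 * ⟪D (x t), D (x t)⟫ := by
      rw [hD (D (x t)) (x t)]; ring
    rwa [e] at this
  have hf : ∀ t : ℝ, HasDerivAt f (2 * g t) t := by
    intro t
    have := (hx t).inner ℝ (hx t)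
    have e : ⟪x t, D (x t)⟫ + ⟪D (x t), x t⟫ = 2 * g t := by
      simp only [hgdef]; rw [real_inner_comm]; ring
    rwa [e] at this
  -- g is monotone
  have hgmono : Monotone g := by
    apply monotone_of_deriv_nonneg (fun t => (hg t).differentiableAt)
    intro t
    rw [(hg t).deriv]
    have := real_inner_self_nonneg (x := D (x t))
    linarith
  -- bound on f
  obtain ⟨M, hM⟩ := hbdd.exists_norm_le
  have hfb : ∀ t : ℝ, f t ≤ M ^ 2 := by
    intro t
    have h1 : ‖x t‖ ≤ M := hM _ ⟨t, rfl⟩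
    have h2 : f t = ‖x t‖ ^ 2 := real_inner_self_eq_norm_sq (x t)
    nlinarith [norm_nonneg (x t)]
  -- g is identically zero
  have hg0 : ∀ t : ℝ, g t = 0 := by
    intro t₀
    by_contra h0
    rcases lt_or_gt_of_ne h0 with hneg | hpos
    · -- g t₀ < 0 : f blows up as t → -∞
      have key : ∀ s ∈ Set.Iic t₀, ∀ y ∈ Set.Iic t₀, s ≤ y → f y - f s ≤ 2 * g t₀ * (y - s) := by
        apply (convex_Iic t₀).image_sub_le_mul_sub_of_deriv_le
        · exact fun s _ => (hf s).continuousAt.continuousWithinAt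
        · exact fun s _ => ((hf s).differentiableAt).differentiableWithinAt
        · intro s hs
          rw [(hf s).deriv]
          have : g s ≤ g t₀ := hgmono (le_of_lt (by simpa [interior_Iic] using hs))
          linarith
      set c := 2 * g t₀ with hc
      have hcneg : c < 0 := by simp [hc]; linarith
      set s := t₀ - (M ^ 2 - f t₀ + 1) / (-c) with hs
      have hMf : f t₀ ≤ M ^ 2 := hfb t₀
      have hnum : 0 < M ^ 2 - f t₀ + 1 := by linarith
      have hdiv : 0 < (M ^ 2 - f t₀ + 1) / (-c) := div_pos hnum (by linarith)
      have hst : s ≤ t₀ := by simp [hs]; linarith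
      have := key s hst t₀ Set.self_mem_Iic hst
      have ht₀s : t₀ - s = (M ^ 2 - f t₀ + 1) / (-c) := by simp [hs]
      have hcm : c * (t₀ - s) = -(M ^ 2 - f t₀ + 1) := by
        have hcne : c ≠ 0 := ne_of_lt hcneg
        rw [ht₀s, div_neg, mul_neg, ← mul_div_assoc, mul_div_cancel_left₀ _ hcne]
      rw [hcm] at this
      have := hfb s
      linarith
    · -- g t₀ > 0 : f blows up as t → ∞
      have key : ∀ s ∈ Set.Ici t₀, ∀ y ∈ Set.Ici t₀, s ≤ y → 2 * g t₀ * (y - s) ≤ f y - f s := by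
        apply (convex_Ici t₀).mul_sub_le_image_sub_of_le_deriv
        · exact fun s _ => (hf s).continuousAt.continuousWithinAt
        · exact fun s _ => ((hf s).differentiableAt).differentiableWithinAt
        · intro s hs
          rw [(hf s).deriv]
          have : g t₀ ≤ g s := hgmono (le_of_lt (by simpa [interior_Ici] using hs))
          linarith
      set c := 2 * g t₀ with hc
      have hcpos : 0 < c := by simp [hc]; linarith
      set y := t₀ + (M ^ 2 - f t₀ + 1) / c with hy
      have hMf : f t₀ ≤ M ^ 2 := hfb t₀
      have hnum : 0 < M ^ 2 - f t₀ + 1 := by linarith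
      have hdiv : 0 < (M ^ 2 - f t₀ + 1) / c := div_pos hnum hcpos
      have hty : t₀ ≤ y := by simp [hy]; linarith
      have := key t₀ Set.self_mem_Ici y hty hty
      have hys : y - t₀ = (M ^ 2 - f t₀ + 1) / c := by simp [hy]
      have hcm : c * (y - t₀) = M ^ 2 - f t₀ + 1 := by
        have hcne : c ≠ 0 := ne_of_gt hcpos
        rw [hys, ← mul_div_assoc, mul_div_cancel_left₀ _ hcne]
      rw [hcm] at this
      have := hfb y
      linarith
  -- g ≡ 0 forces its derivative to vanish, giving ⟪Dv, Dv⟫ = 0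
  have hgzero : g = fun _ : ℝ => (0 : ℝ) := funext hg0
  have hderiv0 : (2 : ℝ) * ⟪D (x 0), D (x 0)⟫ = 0 := by
    have h1 := hg 0
    rw [hgzero] at h1
    exact h1.unique (hasDerivAt_const 0 0)
  have hx0 : x 0 = v := by
    simp [hxdef, NormedSpace.exp_zero]
  rw [hx0] at hderiv0
  have : ⟪D v, D v⟫ = 0 := by linarith
  exact inner_self_eq_zero.mp this
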